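/- Let γ ∈ (0,1) and set ρ = e^{-2(1-γ)}. Then for all x ∈ (0,1), x/(x + (1-x)γ) ≥ (1 - ρ^x)/(1 - ρ). -/

import Mathlib

theorem stmt_3 (γ : ℝ) (hγ0 : 0 < γ) (hγ1 : γ < 1) (x : ℝ) (hx0 : 0 < x) (hx1 : x < 1) :
    (1 - Real.exp (-2 * (1 - γ)) ^ x) / (1 - Real.exp (-2 * (1 - γ))) ≤
      x / (x + (1 - x) * γ) := by
  set s : ℝ := 1 - γ with hs
  have hs0 : 0 < s := by simp [hs]; linarith
  have hs1 : s < 1 := by simp [hs]; linarith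
  set g : ℝ → ℝ := fun y => (1 - Real.exp (-2*s*y)) * (γ + s*y) with hg
  set g' : ℝ → ℝ := fun y =>
    Real.exp (-2*s*y) * (2*s) * (γ + s*y) + (1 - Real.exp (-2*s*y)) * s with hg'
  have hd1 : ∀ y : ℝ, HasDerivAt g (g' y) y := by
    intro y
    have he : HasDerivAt (fun y : ℝ => Real.exp (-2*s*y)) (Real.exp (-2*s*y) * (-2*s)) y := by
      simpa using ((hasDerivAt_id y).const_mul (-2*s)).exp
    have h1 : HasDerivAt (fun y : ℝ => 1 - Real.exp (-2*s*y)) (0 - Real.exp (-2*s*y) * (-2*s)) y :=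
      (hasDerivAt_const y (1:ℝ)).sub he
    have h2 : HasDerivAt (fun y : ℝ => γ + s*y) (0 + s*1) y :=
      (hasDerivAt_const y γ).add ((hasDerivAt_id y).const_mul s)
    have := h1.mul h2
    refine this.congr_deriv ?_
    simp only [hg']
    ring
  have hd2 : ∀ y : ℝ, HasDerivAt g' (Real.exp (-2*s*y) * (4*s^2) * (s*(1-y))) y := by
    intro y
    have he : HasDerivAt (fun y : ℝ => Real.exp (-2*s*y)) (Real.exp (-2*s*y) * (-2*s)) y := by
      simpa using ((hasDerivAt_id y).const_mul (-2*s)).exp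
    have h2 : HasDerivAt (fun y : ℝ => γ + s*y) (0 + s*1) y :=
      (hasDerivAt_const y γ).add ((hasDerivAt_id y).const_mul s)
    have hA : HasDerivAt (fun y : ℝ => Real.exp (-2*s*y) * (2*s) * (γ + s*y))
        ((Real.exp (-2*s*y) * (-2*s)) * (2*s) * (γ + s*y)
          + Real.exp (-2*s*y) * (2*s) * (0 + s*1)) y :=
      (he.mul_const (2*s)).mul h2
    have hB : HasDerivAt (fun y : ℝ => (1 - Real.exp (-2*s*y)) * s)
        ((0 - Real.exp (-2*s*y) * (-2*s)) * s) y :=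
      ((hasDerivAt_const y (1:ℝ)).sub he).mul_const s
    have := hA.add hB
    refine this.congr_deriv ?_
    have hγs : γ = 1 - s := by simp [hs]
    rw [hγs]; ring
  have hcvx : ConvexOn ℝ (Set.Icc (0:ℝ) 1) g := by
    apply convexOn_of_hasDerivWithinAt2_nonneg (convex_Icc 0 1)
      (f' := g') (f'' := fun y => Real.exp (-2*s*y) * (4*s^2) * (s*(1-y)))
    · exact fun y _ => ((hd1 y).continuousAt.continuousWithinAt)
    · exact fun y _ => (hd1 y).hasDerivWithinAt
    · exact fun y _ => (hd2 y).hasDerivWithinAt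
    · intro y hy
      rw [interior_Icc] at hy
      have h1 : (0:ℝ) ≤ Real.exp (-2*s*y) * (4*s^2) := by positivity
      have h2 : (0:ℝ) ≤ s*(1-y) := by
        have := hy.2
        nlinarith
      positivity
  -- convexity chord inequality: g x ≤ (1-x) * g 0 + x * g 1
  have hchord := hcvx.2 (Set.mem_Icc.2 ⟨le_refl 0, zero_le_one⟩)
    (Set.mem_Icc.2 ⟨zero_le_one, le_refl 1⟩) (by linarith : (0:ℝ) ≤ 1 - x)
    (le_of_lt hx0) (by ring : (1 - x) + x = 1)
  simp only [smul_eq_mul, mul_zero, mul_one] at hchord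
  have hg0 : g 0 = 0 := by simp [hg]
  have hg1 : g 1 = 1 - Real.exp (-2*s) := by simp [hg, hs]
  rw [hg0, hg1, zero_add] at hchord
  -- translate goal
  have hρ1 : Real.exp (-2*s) < 1 := Real.exp_lt_one_iff.2 (by linarith)
  have hden1 : (0:ℝ) < 1 - Real.exp (-2*s) := by linarith
  have hden2 : (0:ℝ) < x + (1-x)*γ := by nlinarith
  have hrw : Real.exp (-2*(1-γ)) ^ x = Real.exp (-2*s*x) := by
    rw [← Real.exp_mul]
  have hsg : -2*(1-γ) = -2*s := by simp [hs]
  rw [hrw, hsg, div_le_div_iff₀ hden1 hden2]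
  have hgx : g x = (1 - Real.exp (-2*s*x)) * (γ + s*x) := rfl
  have heq : x + (1-x)*γ = γ + s*x := by simp [hs]; ring
  rw [heq]
  rw [hgx] at hchord
  nlinarith [hchord]
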